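/- Exact-cover characterization for plurality-average control by adding voters: let B be a set of 3k elements (k ≥ 1, with k divisible by 4 if desired) and S a finite collection of 3-element subsets of B. For a subcollection S' ⊆ S, say S' is 'winning' if |S'| ≤ k and for every b ∈ B: |S'| ≥ (k − 1) + |{S ∈ S' : b ∈ S}|. Then a winning subcollection exists if and only if S contains an exact cover of B (a subcollection in which every element of B occurs in exactly one member). -/
import Mathlib

lemma ccav_double_count {α : Type*} [DecidableEq α] (B : Finset α)
    (S' : Finset (Finset α)) (h : ∀ T ∈ S', T ⊆ B) :
    ∑ b ∈ B, (S'.filter (fun T => b ∈ T)).card = ∑ T ∈ S', T.card := by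
  simp_rw [Finset.card_filter]
  rw [Finset.sum_comm]
  refine Finset.sum_congr rfl fun T hT => ?_
  rw [← Finset.card_filter, Finset.filter_mem_eq_inter,
    Finset.inter_eq_right.mpr (h T hT)]

/-- Exact-cover characterization for plurality-average control by adding
voters: `B` has `3k` elements (`k ≥ 1`, `4 ∣ k`), `S` is a collection of
3-element subsets of `B`. A subcollection `S' ⊆ S` is 'winning' if
`|S'| ≤ k` and for every `b ∈ B`, `|S'| ≥ (k−1) + #{T ∈ S' : b ∈ T}`.
Then a winning subcollection exists iff `S` contains an exact cover of `B`. -/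
theorem plurality_average_ccav_exact_cover
    {α : Type*} [DecidableEq α] (k : ℕ) (hk : 1 ≤ k) (hk4 : 4 ∣ k)
    (B : Finset α) (hB : B.card = 3 * k)
    (S : Finset (Finset α)) (hS : ∀ T ∈ S, T ⊆ B ∧ T.card = 3) :
    (∃ S' ⊆ S, S'.card ≤ k ∧
        ∀ b ∈ B, (k - 1) + (S'.filter (fun T => b ∈ T)).card ≤ S'.card) ↔
      (∃ S' ⊆ S, ∀ b ∈ B, (S'.filter (fun T => b ∈ T)).card = 1) := by
  have hk4' : 4 ≤ k := Nat.le_of_dvd hk hk4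
  constructor
  · rintro ⟨S', hsub, hcard, hb⟩
    have hsubB : ∀ T ∈ S', T ⊆ B := fun T hT => (hS T (hsub hT)).1
    have hsum : ∑ b ∈ B, (S'.filter (fun T => b ∈ T)).card = 3 * S'.card := by
      rw [ccav_double_count B S' hsubB]
      rw [Finset.sum_congr rfl fun T hT => (hS T (hsub hT)).2]
      simp [Finset.sum_const, mul_comm]
    have hScard : S'.card = k := by
      by_contra hne
      have hlt : S'.card + 1 ≤ k := by omega
      -- then for each b, f b = 0
      have hzero : ∀ b ∈ B, (S'.filter (fun T => b ∈ T)).card = 0 := by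
        intro b hbB
        have := hb b hbB
        omega
      have : (3 : ℕ) * S'.card = 0 := by
        rw [← hsum]; exact Finset.sum_eq_zero hzero
      have hS0 : S'.card = 0 := by omega
      -- B nonempty
      have hBne : B.Nonempty := by
        rw [← Finset.card_pos, hB]; omega
      obtain ⟨b, hbB⟩ := hBne
      have := hb b hbB
      omega
    refine ⟨S', hsub, fun b hbB => ?_⟩
    have hle1 : ∀ b ∈ B, (S'.filter (fun T => b ∈ T)).card ≤ 1 := by
      intro b hbB
      have := hb b hbB
      omega
    have hsumeq : ∑ b ∈ B, (S'.filter (fun T => b ∈ T)).card = ∑ b ∈ B, 1 := by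
      rw [hsum, hScard, Finset.sum_const, smul_eq_mul, mul_one, hB, mul_comm]
    exact ((Finset.sum_eq_sum_iff_of_le hle1).mp hsumeq) b hbB
  · rintro ⟨S', hsub, hcov⟩
    have hsubB : ∀ T ∈ S', T ⊆ B := fun T hT => (hS T (hsub hT)).1
    have hsum : 3 * k = 3 * S'.card := by
      have h1 : ∑ b ∈ B, (S'.filter (fun T => b ∈ T)).card = 3 * k := by
        rw [Finset.sum_congr rfl hcov, Finset.sum_const, smul_eq_mul, mul_one, hB]
      have h2 := ccav_double_count B S' hsubB
      rw [h1, Finset.sum_congr rfl fun T hT => (hS T (hsub hT)).2,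
        Finset.sum_const, smul_eq_mul, mul_comm] at h2
      omega
    have hScard : S'.card = k := by omega
    refine ⟨S', hsub, le_of_eq hScard, fun b hbB => ?_⟩
    rw [hcov b hbB, hScard]
    omega
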